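/- Let p be a prime, q := p if p is odd and q := 4 if p = 2, let n ≥ 0, and φ := φ(q·pⁿ). Let f be a positive multiple of q·pⁿ and c an odd integer coprime to f. Then, with A_f := (−1/(f·φ))·Σ_{1≤a≤f, gcd(a,f)=1} a^φ·[ā] in ℚ_p[(ℤ/fℤ)ˣ], the element (1 − c^φ·[σ_c])·A_f − Σ_{1≤a≤f, gcd(a,f)=1} λ_a(c)·a^{−1}·[ā] lies in p^{n+1}·ℤ_p[(ℤ/fℤ)ˣ], where a^{−1} denotes the inverse of a in ℤ_p, a′_c is the unique integer in [1,f] with a′_c·c ≡ a (mod f), and λ_a(c) := (a′_c·c − a)/f ∈ ℤ. -/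

import Mathlib

open scoped BigOperators

section helpers
variable {p : ℕ} [Fact p.Prime]

lemma norm_int_eq_one {m : ℤ} (h : ¬ (p : ℤ) ∣ m) : ‖(m : ℚ_[p])‖ = 1 := by
  refine le_antisymm (Padic.norm_int_le_one m) ?_
  by_contra hlt
  push_neg at hlt
  exact h (Padic.norm_intCast_lt_one_iff.1 hlt)

lemma my_norm_sum_le {ι : Type*} {s : Finset ι} {F : ι → ℚ_[p]} {r : ℝ}
    (hr : 0 ≤ r) (h : ∀ i ∈ s, ‖F i‖ ≤ r) : ‖∑ i ∈ s, F i‖ ≤ r := by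
  classical
  refine Finset.sum_induction F (fun x => ‖x‖ ≤ r) (fun a b ha hb => ?_) (by simpa using hr) h
  exact le_trans (Padic.nonarchimedean a b) (max_le ha hb)

lemma three_pow_ge (v : ℕ) (hv : 1 ≤ v) : v + 2 ≤ 3 ^ v := by
  induction v with
  | zero => omega
  | succ k ih =>
    rcases Nat.eq_or_lt_of_le hv with h | h
    · simp [← h]
    · have hk : 1 ≤ k := by omega
      have := ih hk
      have h3 : 3 ^ k ≥ 1 := Nat.one_le_pow _ _ (by norm_num)
      calc k + 1 + 2 ≤ 3 ^ k + 1 := by omega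
        _ ≤ 3 ^ (k + 1) := by rw [pow_succ]; omega

lemma factorization_le (hp : p.Prime) {k : ℕ} (hk : 2 ≤ k) :
    k.factorization p ≤ k - 2 + (if p = 2 then 1 else 0) := by
  have hk0 : k ≠ 0 := by omega
  have hle : p ^ k.factorization p ≤ k := Nat.ordProj_le p hk0
  by_cases h2 : p = 2
  · subst h2
    have h1 : k < 2 ^ k := Nat.lt_two_pow_self
    have : 2 ^ k.factorization 2 < 2 ^ k := lt_of_le_of_lt hle h1
    have hlt := (Nat.pow_lt_pow_iff_right (by norm_num : 1 < 2)).1 this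
    rw [if_pos rfl]
    omega
  · simp only [if_neg h2]
    have hp3 : 3 ≤ p := by
      rcases Nat.eq_zero_or_pos p with _ | _
      all_goals (have h2le := hp.two_le; omega)
    rcases Nat.eq_zero_or_pos (k.factorization p) with h0 | h0
    · omega
    · have h3 : 3 ^ k.factorization p ≤ p ^ k.factorization p :=
        Nat.pow_le_pow_left hp3 _
      have := three_pow_ge (k.factorization p) h0
      omega

lemma norm_inv_natCast {k : ℕ} (hk : k ≠ 0) :
    ‖((k : ℚ_[p]))⁻¹‖ = (p : ℝ) ^ (k.factorization p : ℤ) := by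
  have hp : p.Prime := Fact.out
  have hsplit : (p ^ k.factorization p) * (k / p ^ k.factorization p) = k :=
    Nat.ordProj_mul_ordCompl_eq_self k p
  have hnd : ¬ (p : ℤ) ∣ ((k / p ^ k.factorization p : ℕ) : ℤ) := by
    rw [Int.natCast_dvd_natCast]
    exact Nat.not_dvd_ordCompl hp hk
  have hcast : (k : ℚ_[p]) = (p : ℚ_[p]) ^ k.factorization p * ((k / p ^ k.factorization p : ℕ) : ℚ_[p]) := by
    rw [← Nat.cast_pow, ← Nat.cast_mul, hsplit]
  have h1 : ‖((k / p ^ k.factorization p : ℕ) : ℚ_[p])‖ = 1 := by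
    have := norm_int_eq_one (p := p) hnd
    rwa [Int.cast_natCast] at this
  rw [norm_inv, hcast, norm_mul, h1, mul_one, Padic.norm_p_pow, ← zpow_neg, neg_neg]

end helpers

lemma scalar_bound (p : ℕ) [Fact p.Prime] (n φ f : ℕ) (hφpos : 0 < φ) (hf0 : 0 < f)
    (hNdvd : p ^ (n + 1 + (if p = 2 then 1 else 0)) ∣ f)
    (b c a'' : ℕ) (L : ℤ) (hb1 : 1 ≤ b) (hbp : ¬ p ∣ b)
    (heuler : (p : ℤ) ^ (n + 1) ∣ (b : ℤ) ^ φ - 1)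
    (hkey : (a'' : ℤ) * c = (b : ℤ) + L * f) :
    ‖-(1 / ((f : ℚ_[p]) * (φ : ℚ_[p]))) * (b : ℚ_[p]) ^ φ
      - -(1 / ((f : ℚ_[p]) * (φ : ℚ_[p]))) * ((c : ℚ_[p]) ^ φ * (a'' : ℚ_[p]) ^ φ)
      - (L : ℚ_[p]) * (b : ℚ_[p])⁻¹‖ ≤ (p : ℝ) ^ (-(n + 1 : ℕ) : ℤ) := by
  have hp : p.Prime := Fact.out
  have hppos : (0 : ℝ) < p := by exact_mod_cast hp.pos
  have h1p : (1 : ℝ) < p := by exact_mod_cast hp.one_lt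
  have hrpos : (0 : ℝ) ≤ (p : ℝ) ^ (-(n + 1 : ℕ) : ℤ) := le_of_lt (zpow_pos hppos _)
  obtain ⟨m, hm⟩ : ∃ m, φ = m + 1 := ⟨φ - 1, by omega⟩
  subst hm
  have hfQ : (f : ℚ_[p]) ≠ 0 := Nat.cast_ne_zero.2 hf0.ne'
  have hφQ : ((m : ℚ_[p]) + 1) ≠ 0 := by
    have : ((m + 1 : ℕ) : ℚ_[p]) ≠ 0 := Nat.cast_ne_zero.2 (by omega)
    push_cast at this; exact this
  have hbQ : (b : ℚ_[p]) ≠ 0 := Nat.cast_ne_zero.2 (by omega)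
  -- rewrite c^φ a''^φ
  have hca : (c : ℚ_[p]) ^ (m + 1) * (a'' : ℚ_[p]) ^ (m + 1)
      = ((b : ℚ_[p]) + (L : ℚ_[p]) * (f : ℚ_[p])) ^ (m + 1) := by
    rw [← mul_pow]
    congr 1
    have h0 : (((a'' : ℤ) * c : ℤ) : ℚ_[p]) = (((b : ℤ) + L * f : ℤ) : ℚ_[p]) := by rw [hkey]
    push_cast at h0
    rw [mul_comm]
    exact h0
  rw [hca]
  -- binomial expansion
  have hwexp : ((b : ℚ_[p]) + (L : ℚ_[p]) * (f : ℚ_[p])) ^ (m + 1)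
      = ∑ k ∈ Finset.range (m + 2), ((L : ℚ_[p]) * f) ^ k * (b : ℚ_[p]) ^ (m + 1 - k)
          * ((m + 1).choose k : ℚ_[p]) := by
    rw [add_comm]
    exact add_pow _ _ _
  set w : ℚ_[p] := ((L * ((b : ℤ) ^ (m + 1) - 1) : ℤ) : ℚ_[p]) * (b : ℚ_[p])⁻¹ with hw
  have hE : -(1 / ((f : ℚ_[p]) * ((m + 1 : ℕ) : ℚ_[p]))) * (b : ℚ_[p]) ^ (m + 1)
      - -(1 / ((f : ℚ_[p]) * ((m + 1 : ℕ) : ℚ_[p]))) * ((b : ℚ_[p]) + (L : ℚ_[p]) * f) ^ (m + 1)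
      - (L : ℚ_[p]) * (b : ℚ_[p])⁻¹
      = (1 / ((f : ℚ_[p]) * ((m + 1 : ℕ) : ℚ_[p]))) *
          (∑ i ∈ Finset.range m,
            ((L : ℚ_[p]) * f) ^ (i + 1 + 1) * (b : ℚ_[p]) ^ (m + 1 - (i + 1 + 1))
              * ((m + 1).choose (i + 1 + 1) : ℚ_[p])) + w := by
    rw [hwexp, Finset.sum_range_succ', Finset.sum_range_succ', hw]
    simp only [pow_zero, one_mul, Nat.sub_zero, Nat.choose_zero_right, Nat.cast_one, mul_one,
      Nat.choose_one_right, pow_one, Nat.add_sub_cancel]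
    push_cast
    field_simp
    ring_nf
    simp only [Nat.choose_one_right, Nat.cast_add, Nat.cast_one]
    ring
  rw [hE]
  refine le_trans (Padic.nonarchimedean (p := p) _ _) (max_le ?_ ?_)
  · -- sum of higher-order terms
    rw [Finset.mul_sum]
    refine my_norm_sum_le hrpos ?_
    intro i hi
    have him : i < m := Finset.mem_range.1 hi
    have hk2 : ((i + 2 : ℕ) : ℚ_[p]) ≠ 0 := Nat.cast_ne_zero.2 (by omega)
    have hch : ((m + 1 : ℕ) : ℚ_[p]) * ((m.choose (i + 1) : ℕ) : ℚ_[p])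
        = (((m + 1).choose (i + 2) : ℕ) : ℚ_[p]) * ((i + 2 : ℕ) : ℚ_[p]) := by
      exact_mod_cast congrArg (Nat.cast (R := ℚ_[p])) (Nat.add_one_mul_choose_eq m (i + 1))
    have hterm : 1 / ((f : ℚ_[p]) * ((m + 1 : ℕ) : ℚ_[p])) *
          (((L : ℚ_[p]) * f) ^ (i + 1 + 1) * (b : ℚ_[p]) ^ (m + 1 - (i + 1 + 1))
            * (((m + 1).choose (i + 1 + 1) : ℕ) : ℚ_[p]))
        = ((L ^ (i + 2) * (f : ℤ) ^ (i + 1) * (b : ℤ) ^ (m - (i + 1)) * (m.choose (i + 1) : ℤ) : ℤ) : ℚ_[p])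
            * (((i + 2 : ℕ) : ℚ_[p]))⁻¹ := by
      have hexp : m + 1 - (i + 1 + 1) = m - (i + 1) := by omega
      rw [hexp]
      push_cast
      push_cast at hch
      have hk2' : ((i : ℚ_[p]) + 2) ≠ 0 := by exact_mod_cast hk2
      field_simp
      linear_combination (-((L : ℚ_[p]) ^ (i + 2)) * (f : ℚ_[p]) ^ (i + 2)) * hch
    rw [hterm, norm_mul]
    set e : ℕ := if p = 2 then 1 else 0 with he
    have hdvd : (p : ℤ) ^ ((i + 1) * (n + 1 + e)) ∣
        (L ^ (i + 2) * (f : ℤ) ^ (i + 1) * (b : ℤ) ^ (m - (i + 1)) * (m.choose (i + 1) : ℤ)) := by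
      have h1 : ((p : ℤ) ^ (n + 1 + e)) ^ (i + 1) ∣ ((f : ℤ)) ^ (i + 1) := by
        refine pow_dvd_pow_of_dvd ?_ _
        exact_mod_cast Int.natCast_dvd_natCast.2 hNdvd
      rw [← pow_mul, mul_comm (n + 1 + e)] at h1
      exact ((h1.mul_left (L ^ (i + 2))).mul_right _).mul_right _
    have normZ : ‖((L ^ (i + 2) * (f : ℤ) ^ (i + 1) * (b : ℤ) ^ (m - (i + 1)) * (m.choose (i + 1) : ℤ) : ℤ) : ℚ_[p])‖
        ≤ (p : ℝ) ^ (-(((i + 1) * (n + 1 + e) : ℕ)) : ℤ) :=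
      (Padic.norm_int_le_pow_iff_dvd _ _).2 hdvd
    have normInv : ‖(((i + 2 : ℕ) : ℚ_[p]))⁻¹‖ = (p : ℝ) ^ (((i + 2).factorization p : ℕ) : ℤ) :=
      norm_inv_natCast (by omega)
    rw [normInv]
    have hv : (i + 2).factorization p ≤ i + e := by
      have h := factorization_le hp (k := i + 2) (by omega)
      rw [← he] at h
      omega
    have harith : (n + 1) + (i + 2).factorization p ≤ (i + 1) * (n + 1 + e) := by
      have h2 : (i + 1) * (n + 1 + e) = i * (n + 1 + e) + (n + 1 + e) := by ring
      have h3 : i * 1 ≤ i * (n + 1 + e) := Nat.mul_le_mul_left i (by omega)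
      omega
    calc ‖((L ^ (i + 2) * (f : ℤ) ^ (i + 1) * (b : ℤ) ^ (m - (i + 1)) * (m.choose (i + 1) : ℤ) : ℤ) : ℚ_[p])‖
          * (p : ℝ) ^ (((i + 2).factorization p : ℕ) : ℤ)
        ≤ (p : ℝ) ^ (-(((i + 1) * (n + 1 + e) : ℕ)) : ℤ) * (p : ℝ) ^ (((i + 2).factorization p : ℕ) : ℤ) := by
          exact mul_le_mul_of_nonneg_right normZ (le_of_lt (zpow_pos hppos _))
      _ = (p : ℝ) ^ ((-(((i + 1) * (n + 1 + e) : ℕ)) : ℤ) + (((i + 2).factorization p : ℕ) : ℤ)) := by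
          rw [← zpow_add₀ hppos.ne']
      _ ≤ (p : ℝ) ^ (-(n + 1 : ℕ) : ℤ) := by
          refine zpow_le_zpow_right₀ (le_of_lt h1p) ?_
          have := harith
          omega
  · -- w term
    rw [hw, norm_mul]
    have h1 : ‖(((L * ((b : ℤ) ^ (m + 1) - 1)) : ℤ) : ℚ_[p])‖ ≤ (p : ℝ) ^ (-(n + 1 : ℕ) : ℤ) :=
      (Padic.norm_int_le_pow_iff_dvd _ _).2 (Dvd.dvd.mul_left heuler L)
    have h2 : ‖(b : ℚ_[p])⁻¹‖ = 1 := by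
      rw [norm_inv]
      have : ‖((b : ℤ) : ℚ_[p])‖ = 1 := norm_int_eq_one (by exact_mod_cast hbp)
      rw [Int.cast_natCast] at this
      rw [this, inv_one]
    rw [h2, mul_one]
    exact h1

/-- `A_f := (−1/(f·φ))·Σ_{1≤a≤f, gcd(a,f)=1} a^φ·[ā] ∈ ℚ_p[(ℤ/fℤ)ˣ]`. -/
noncomputable def aElt (p : ℕ) [Fact p.Prime] (φ f : ℕ) :
    MonoidAlgebra ℚ_[p] (ZMod f)ˣ :=
  (-(1 / ((f : ℚ_[p]) * (φ : ℚ_[p])))) •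
    ∑ a ∈ Finset.Icc 1 f,
      if h : Nat.Coprime a f then
        ((a : ℚ_[p]) ^ φ) • MonoidAlgebra.single (ZMod.unitOfCoprime a h) (1 : ℚ_[p])
      else 0

theorem statement10 (p : ℕ) [Fact p.Prime] (n : ℕ)
    (q : ℕ) (hq : q = if p = 2 then 4 else p)
    (φ : ℕ) (hφ : φ = (q * p ^ n).totient)
    (f : ℕ) (hf : 0 < f) (hmul : q * p ^ n ∣ f)
    (c : ℕ) (hcodd : Odd c) (hc : Nat.Coprime c f)
    -- `a' a` is the unique integer in `[1,f]` with `a' a · c ≡ a (mod f)`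
    (a' : ℕ → ℕ)
    (ha' : ∀ a, 1 ≤ a → a ≤ f → Nat.Coprime a f →
      1 ≤ a' a ∧ a' a ≤ f ∧ a' a * c ≡ a [MOD f])
    -- `lam a = λ_a(c) := (a' a · c − a)/f ∈ ℤ`
    (lam : ℕ → ℤ)
    (hlam : ∀ a, 1 ≤ a → a ≤ f → Nat.Coprime a f →
      lam a * f = (a' a : ℤ) * c - a) :
    -- the difference lies in `p^{n+1}·ℤ_p[(ℤ/fℤ)ˣ]`
    ∃ y : MonoidAlgebra ℚ_[p] (ZMod f)ˣ,
      (∀ g : (ZMod f)ˣ, ∃ z : ℤ_[p], y.coeff g = (z : ℚ_[p])) ∧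
      (1 - ((c : ℚ_[p]) ^ φ) •
            MonoidAlgebra.single (ZMod.unitOfCoprime c hc) (1 : ℚ_[p])) * aElt p φ f
        - (∑ a ∈ Finset.Icc 1 f,
            if h : Nat.Coprime a f then
              ((lam a : ℚ_[p]) * (a : ℚ_[p])⁻¹) •
                MonoidAlgebra.single (ZMod.unitOfCoprime a h) (1 : ℚ_[p])
            else 0)
      = ((p : ℚ_[p]) ^ (n + 1)) • y := by
  classical
  have hp : p.Prime := Fact.out
  haveI : NeZero f := ⟨hf.ne'⟩
  have hq2 : 2 ≤ q := by
    rw [hq]; split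
    · omega
    · exact hp.two_le
  have hqpn : 0 < q * p ^ n := Nat.mul_pos (by omega) (pow_pos hp.pos n)
  have hφpos : 0 < φ := by rw [hφ]; exact Nat.totient_pos.2 hqpn
  have hf2 : 2 ≤ f :=
    le_trans (le_trans hq2 (Nat.le_mul_of_pos_right q (pow_pos hp.pos n))) (Nat.le_of_dvd hf hmul)
  have hpq : p ∣ q := by
    rw [hq]
    by_cases h2 : p = 2
    · rw [if_pos h2, h2]
      exact ⟨2, rfl⟩
    · rw [if_neg h2]
  have hpf : p ∣ f := dvd_trans (dvd_mul_of_dvd_left hpq _) hmul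
  have hNqpn : p ^ (n + 1 + (if p = 2 then 1 else 0)) ∣ q * p ^ n := by
    by_cases h2 : p = 2
    · subst h2
      rw [hq, if_pos rfl, if_pos rfl]
      have : (4 : ℕ) * 2 ^ n = 2 ^ (n + 1 + 1) := by ring
      rw [this]
    · rw [hq, if_neg h2, if_neg h2]
      have : p * p ^ n = p ^ (n + 1 + 0) := by ring
      rw [this]
  have hNdvd : p ^ (n + 1 + (if p = 2 then 1 else 0)) ∣ f := hNqpn.trans hmul
  -- Euler's theorem consequence
  have heuler : ∀ a : ℕ, a.Coprime f → (p : ℤ) ^ (n + 1) ∣ (a : ℤ) ^ φ - 1 := by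
    intro a ha
    have hcop : a.Coprime (q * p ^ n) := Nat.Coprime.coprime_dvd_right hmul ha
    have heu : a ^ φ ≡ 1 [MOD q * p ^ n] := by rw [hφ]; exact Nat.ModEq.pow_totient hcop
    have hdvd1 : ((q * p ^ n : ℕ) : ℤ) ∣ ((1 : ℕ) : ℤ) - ((a ^ φ : ℕ) : ℤ) := heu.dvd
    have hdvd2 : ((q * p ^ n : ℕ) : ℤ) ∣ (a : ℤ) ^ φ - 1 := by
      have h5 := hdvd1.neg_right
      rw [neg_sub] at h5
      push_cast at h5
      push_cast
      exact h5
    refine dvd_trans ?_ hdvd2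
    have h1 : (p : ℤ) ^ (n + 1) ∣ (p : ℤ) ^ (n + 1 + (if p = 2 then 1 else 0)) :=
      pow_dvd_pow _ (by omega)
    refine h1.trans ?_
    exact_mod_cast Int.natCast_dvd_natCast.2 hNqpn
  -- basic coprimality facts
  have hlt_of_cop : ∀ a : ℕ, a.Coprime f → a ≤ f → a < f := by
    intro a h hle
    refine lt_of_le_of_ne hle ?_
    rintro rfl
    have hgcd : Nat.gcd a a = a := Nat.gcd_self a
    rw [Nat.Coprime, hgcd] at h
    omega
  have gcd_of_modEq : ∀ x y : ℕ, x ≡ y [MOD f] → y.Coprime f → x.Coprime f := by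
    intro x y hxy hy
    have hx : x % f = y % f := hxy
    rw [Nat.Coprime, Nat.gcd_comm, Nat.gcd_rec, hx, ← Nat.gcd_rec, Nat.gcd_comm]
    exact hy
  -- facts about j a := a * c % f
  have hjmem : ∀ a : ℕ, a.Coprime f → (a * c % f).Coprime f ∧ 1 ≤ a * c % f ∧ a * c % f ≤ f := by
    intro a h
    have h1 : (a * c).Coprime f := Nat.Coprime.mul h hc
    have h2 : (a * c % f).Coprime f := gcd_of_modEq _ _ (Nat.mod_modEq (a * c) f) h1
    have h3 : a * c % f < f := Nat.mod_lt _ (by omega)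
    have h4 : 1 ≤ a * c % f := by
      by_contra h0
      have : a * c % f = 0 := by omega
      rw [this] at h2
      have : Nat.gcd 0 f = f := Nat.gcd_zero_left f
      rw [Nat.Coprime, this] at h2
      omega
    exact ⟨h2, h4, le_of_lt h3⟩
  -- facts about a'
  have ha'fact : ∀ b : ℕ, 1 ≤ b → b ≤ f → b.Coprime f →
      (a' b).Coprime f ∧ 1 ≤ a' b ∧ a' b ≤ f ∧ a' b * c ≡ b [MOD f] := by
    intro b hb1 hb2 hbc
    obtain ⟨h1, h2, h3⟩ := ha' b hb1 hb2 hbc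
    have hcop : (a' b * c).Coprime f := gcd_of_modEq _ _ h3 hbc
    exact ⟨Nat.Coprime.coprime_dvd_left (dvd_mul_right (a' b) c) hcop, h1, h2, h3⟩
  -- left inverse : a' (a * c % f) = a
  have hleft : ∀ a : ℕ, 1 ≤ a → a ≤ f → a.Coprime f → a' (a * c % f) = a := by
    intro a h1 h2 h3
    obtain ⟨hj1, hj2, hj3⟩ := hjmem a h3
    obtain ⟨hc1, hc2, hc3, hc4⟩ := ha'fact _ hj2 hj3 hj1
    have hmodeq : a' (a * c % f) * c ≡ a * c [MOD f] :=
      hc4.trans (Nat.mod_modEq (a * c) f)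
    have hcan : a' (a * c % f) ≡ a [MOD f] :=
      Nat.ModEq.cancel_right_of_coprime (by rw [Nat.gcd_comm]; exact hc) hmodeq
    have hlt1 : a' (a * c % f) < f := hlt_of_cop _ hc1 hc3
    have hlt2 : a < f := hlt_of_cop _ h3 h2
    have : a' (a * c % f) % f = a % f := hcan
    rwa [Nat.mod_eq_of_lt hlt1, Nat.mod_eq_of_lt hlt2] at this
  -- right inverse : a' b * c % f = b
  have hright : ∀ b : ℕ, 1 ≤ b → b ≤ f → b.Coprime f → a' b * c % f = b := by
    intro b h1 h2 h3
    obtain ⟨hc1, hc2, hc3, hc4⟩ := ha'fact b h1 h2 h3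
    have : a' b * c % f = b % f := hc4
    rwa [Nat.mod_eq_of_lt (hlt_of_cop _ h3 h2)] at this
  -- unit equality
  have hunit : ∀ (a : ℕ) (h : a.Coprime f) (hj : (a * c % f).Coprime f),
      ZMod.unitOfCoprime _ hj = ZMod.unitOfCoprime c hc * ZMod.unitOfCoprime a h := by
    intro a h hj
    apply Units.ext
    rw [Units.val_mul, ZMod.coe_unitOfCoprime, ZMod.coe_unitOfCoprime, ZMod.coe_unitOfCoprime,
      ZMod.natCast_mod, Nat.cast_mul]
    ring
  -- notation
  set s : ℚ_[p] := -(1 / ((f : ℚ_[p]) * (φ : ℚ_[p]))) with hs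
  set S := Finset.Icc 1 f with hS
  -- expansion of aElt
  have hEq1 : aElt p φ f = ∑ a ∈ S, if h : a.Coprime f then
      (s * (a : ℚ_[p]) ^ φ) • MonoidAlgebra.single (ZMod.unitOfCoprime a h) (1 : ℚ_[p])
      else 0 := by
    rw [aElt, Finset.smul_sum]
    refine Finset.sum_congr rfl fun a _ => ?_
    by_cases h : a.Coprime f
    · rw [dif_pos h, dif_pos h, smul_smul]
    · rw [dif_neg h, dif_neg h, smul_zero]
  -- restriction to the coprime elements
  have hrestrict : ∀ (G : (a : ℕ) → a.Coprime f → MonoidAlgebra ℚ_[p] (ZMod f)ˣ),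
      (∑ a ∈ S, if h : a.Coprime f then G a h else 0)
        = ∑ a ∈ S.filter (fun a => a.Coprime f), if h : a.Coprime f then G a h else 0 := by
    intro G
    refine (Finset.sum_subset (Finset.filter_subset _ _) ?_).symm
    intro x hx hnx
    rw [dif_neg]
    intro hco
    exact hnx (Finset.mem_filter.2 ⟨hx, hco⟩)
  -- the product identity
  have hprod : (((c : ℚ_[p]) ^ φ) • MonoidAlgebra.single (ZMod.unitOfCoprime c hc) (1 : ℚ_[p]))
        * aElt p φ f
      = ∑ a ∈ S, if h : a.Coprime f then
          (s * ((c : ℚ_[p]) ^ φ * ((a' a : ℕ) : ℚ_[p]) ^ φ)) •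
            MonoidAlgebra.single (ZMod.unitOfCoprime a h) (1 : ℚ_[p])
          else 0 := by
    rw [hEq1, Finset.mul_sum]
    have hstep : ∀ a ∈ S, (((c : ℚ_[p]) ^ φ) • MonoidAlgebra.single (ZMod.unitOfCoprime c hc) (1 : ℚ_[p]))
          * (if h : a.Coprime f then
              (s * (a : ℚ_[p]) ^ φ) • MonoidAlgebra.single (ZMod.unitOfCoprime a h) (1 : ℚ_[p])
            else 0)
        = (if h : a.Coprime f then
            ((c : ℚ_[p]) ^ φ * (s * (a : ℚ_[p]) ^ φ)) •
              MonoidAlgebra.single (ZMod.unitOfCoprime c hc * ZMod.unitOfCoprime a h) (1 : ℚ_[p])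
          else 0) := by
      intro a _
      by_cases h : a.Coprime f
      · rw [dif_pos h, dif_pos h, smul_mul_assoc, mul_smul_comm, MonoidAlgebra.single_mul_single,
          mul_one, smul_smul]
      · rw [dif_neg h, dif_neg h, mul_zero]
    rw [Finset.sum_congr rfl hstep]
    rw [hrestrict (fun a h => ((c : ℚ_[p]) ^ φ * (s * (a : ℚ_[p]) ^ φ)) •
      MonoidAlgebra.single (ZMod.unitOfCoprime c hc * ZMod.unitOfCoprime a h) (1 : ℚ_[p]))]
    rw [hrestrict (fun a h => (s * ((c : ℚ_[p]) ^ φ * ((a' a : ℕ) : ℚ_[p]) ^ φ)) •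
      MonoidAlgebra.single (ZMod.unitOfCoprime a h) (1 : ℚ_[p]))]
    refine Finset.sum_nbij' (fun a => a * c % f) a' ?_ ?_ ?_ ?_ ?_
    · intro a ha
      obtain ⟨haS, hac⟩ := Finset.mem_filter.1 ha
      obtain ⟨h1, h2, h3⟩ := hjmem a hac
      exact Finset.mem_filter.2 ⟨Finset.mem_Icc.2 ⟨h2, h3⟩, h1⟩
    · intro b hb
      obtain ⟨hbS, hbc⟩ := Finset.mem_filter.1 hb
      obtain ⟨hb1, hb2⟩ := Finset.mem_Icc.1 hbS
      obtain ⟨h1, h2, h3, h4⟩ := ha'fact b hb1 hb2 hbc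
      exact Finset.mem_filter.2 ⟨Finset.mem_Icc.2 ⟨h2, h3⟩, h1⟩
    · intro a ha
      obtain ⟨haS, hac⟩ := Finset.mem_filter.1 ha
      obtain ⟨h1, h2⟩ := Finset.mem_Icc.1 haS
      exact hleft a h1 h2 hac
    · intro b hb
      obtain ⟨hbS, hbc⟩ := Finset.mem_filter.1 hb
      obtain ⟨h1, h2⟩ := Finset.mem_Icc.1 hbS
      exact hright b h1 h2 hbc
    · intro a ha
      obtain ⟨haS, hac⟩ := Finset.mem_filter.1 ha
      obtain ⟨h1, h2⟩ := Finset.mem_Icc.1 haS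
      obtain ⟨hj1, hj2, hj3⟩ := hjmem a hac
      rw [dif_pos hac, dif_pos hj1]
      rw [hleft a h1 h2 hac, hunit a hac hj1]
      congr 1
      ring
  rw [sub_mul, one_mul, hprod, hEq1, ← Finset.sum_sub_distrib, ← Finset.sum_sub_distrib]
  -- final combined sum
  have hD : ∀ a ∈ S, ((if h : a.Coprime f then
        (s * (a : ℚ_[p]) ^ φ) • MonoidAlgebra.single (ZMod.unitOfCoprime a h) (1 : ℚ_[p]) else 0)
      - (if h : a.Coprime f then
        (s * ((c : ℚ_[p]) ^ φ * ((a' a : ℕ) : ℚ_[p]) ^ φ)) •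
          MonoidAlgebra.single (ZMod.unitOfCoprime a h) (1 : ℚ_[p]) else 0)
      - (if h : a.Coprime f then
        ((lam a : ℚ_[p]) * (a : ℚ_[p])⁻¹) •
          MonoidAlgebra.single (ZMod.unitOfCoprime a h) (1 : ℚ_[p]) else 0))
      = (if h : a.Coprime f then
        (s * (a : ℚ_[p]) ^ φ - s * ((c : ℚ_[p]) ^ φ * ((a' a : ℕ) : ℚ_[p]) ^ φ)
          - (lam a : ℚ_[p]) * (a : ℚ_[p])⁻¹) •
          MonoidAlgebra.single (ZMod.unitOfCoprime a h) (1 : ℚ_[p]) else 0) := by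
    intro a _
    by_cases h : a.Coprime f
    · rw [dif_pos h, dif_pos h, dif_pos h, dif_pos h, ← sub_smul, ← sub_smul]
    · rw [dif_neg h, dif_neg h, dif_neg h, dif_neg h, sub_zero, sub_zero]
  rw [Finset.sum_congr rfl hD]
  -- the norm bound for the coefficients
  have hπ : ((p : ℚ_[p]) ^ (n + 1)) ≠ 0 := by
    refine pow_ne_zero _ ?_
    exact_mod_cast (Nat.cast_ne_zero (R := ℚ_[p])).2 hp.pos.ne'
  have hcoeff : ∀ a : ℕ, a ∈ S → a.Coprime f →
      ‖s * (a : ℚ_[p]) ^ φ - s * ((c : ℚ_[p]) ^ φ * ((a' a : ℕ) : ℚ_[p]) ^ φ)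
        - (lam a : ℚ_[p]) * (a : ℚ_[p])⁻¹‖ ≤ (p : ℝ) ^ (-(n + 1 : ℕ) : ℤ) := by
    intro a haS hac
    obtain ⟨h1, h2⟩ := Finset.mem_Icc.1 haS
    have hbp : ¬ p ∣ a := by
      intro hdvd
      have := Nat.dvd_gcd hdvd hpf
      rw [Nat.Coprime] at hac
      rw [hac] at this
      have := Nat.le_of_dvd one_pos this
      have := hp.two_le
      omega
    have hkey : ((a' a : ℕ) : ℤ) * c = (a : ℤ) + lam a * f := by
      have := hlam a h1 h2 hac
      linarith
    have := scalar_bound p n φ f hφpos hf hNdvd a c (a' a) (lam a) h1 hbp (heuler a hac) hkey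
    rw [hs]
    exact this
  -- construct y
  set t : ℕ → ℚ_[p] := fun a => ((p : ℚ_[p]) ^ (n + 1))⁻¹ * (s * (a : ℚ_[p]) ^ φ
      - s * ((c : ℚ_[p]) ^ φ * ((a' a : ℕ) : ℚ_[p]) ^ φ)
      - (lam a : ℚ_[p]) * (a : ℚ_[p])⁻¹) with ht
  refine ⟨∑ a ∈ S, if h : a.Coprime f then
      (t a) • MonoidAlgebra.single (ZMod.unitOfCoprime a h) (1 : ℚ_[p]) else 0, ?_, ?_⟩
  · -- integrality of coefficients
    intro g
    have htle : ∀ a ∈ S, a.Coprime f → ‖t a‖ ≤ 1 := by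
      intro a haS h
      rw [ht]
      simp only []
      rw [norm_mul, norm_inv, Padic.norm_p_pow]
      have hnn := hcoeff a haS h
      have hppos : (0 : ℝ) < p := by exact_mod_cast hp.pos
      have hfe : ((p : ℝ) ^ (-(n + 1 : ℕ) : ℤ))⁻¹ * (p : ℝ) ^ (-(n + 1 : ℕ) : ℤ) = 1 := by
        rw [inv_mul_cancel₀]
        exact (zpow_pos hppos _).ne'
      calc ((p : ℝ) ^ (-(n + 1 : ℕ) : ℤ))⁻¹ * ‖(s * (a : ℚ_[p]) ^ φ
          - s * ((c : ℚ_[p]) ^ φ * ((a' a : ℕ) : ℚ_[p]) ^ φ)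
          - (lam a : ℚ_[p]) * (a : ℚ_[p])⁻¹)‖
          ≤ ((p : ℝ) ^ (-(n + 1 : ℕ) : ℤ))⁻¹ * (p : ℝ) ^ (-(n + 1 : ℕ) : ℤ) := by
            refine mul_le_mul_of_nonneg_left hnn ?_
            exact le_of_lt (inv_pos.2 (zpow_pos hppos _))
        _ = 1 := hfe
    have hbound : ‖(∑ a ∈ S, if h : a.Coprime f then
        (t a) • MonoidAlgebra.single (ZMod.unitOfCoprime a h) (1 : ℚ_[p]) else 0).coeff g‖ ≤ 1 := by
      rw [MonoidAlgebra.coeff_sum, Finset.sum_apply']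
      refine my_norm_sum_le zero_le_one ?_
      intro a haS
      by_cases h : a.Coprime f
      · rw [dif_pos h, MonoidAlgebra.coeff_smul_apply, smul_eq_mul, norm_mul]
        have hsingle : ‖(MonoidAlgebra.single (ZMod.unitOfCoprime a h) (1 : ℚ_[p])).coeff g‖ ≤ 1 := by
          rw [MonoidAlgebra.coeff_single, Finsupp.single_apply]
          split
          · simp
          · simp
        calc ‖t a‖ * ‖(MonoidAlgebra.single (ZMod.unitOfCoprime a h) (1 : ℚ_[p])).coeff g‖
            ≤ 1 * 1 := mul_le_mul (htle a haS h) hsingle (norm_nonneg _) zero_le_one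
          _ = 1 := by norm_num
      · rw [dif_neg h]
        simp
    exact ⟨⟨_, hbound⟩, rfl⟩
  · -- the equation
    rw [Finset.smul_sum]
    refine Finset.sum_congr rfl fun a _ => ?_
    by_cases h : a.Coprime f
    · rw [dif_pos h, dif_pos h, smul_smul, ht]
      simp only []
      rw [mul_inv_cancel_left₀ hπ]
    · rw [dif_neg h, dif_neg h, smul_zero]
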